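/- The infinite Thue–Morse word t, defined by t_b = (sum of binary digits of b) mod 2, is strongly cube-free: it contains no factor of the form u u first(u) for any nonempty word u. -/

import Mathlib

/-- The Thue–Morse word: bit `n` is the parity of the number of 1s in the
binary expansion of `n`. -/
def tm (n : ℕ) : Fin 2 := Fin.ofNat 2 (Nat.digits 2 n).sum

/-- A finite word `u` is a factor of the infinite word `w` if it occurs as a
contiguous subword of `w`. -/
def IsFactorOf {α : Type*} (u : List α) (w : ℕ → α) : Prop :=
  ∃ i : ℕ, u = (List.range u.length).map (fun j => w (i + j))

open Fin.NatCast Fin.CommRing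

lemma tm_two_mul (k : ℕ) : tm (2*k) = tm k := by
  rcases Nat.eq_zero_or_pos k with rfl | hk
  · rfl
  · unfold tm
    simp only [Fin.ofNat_eq_cast]
    rw [Nat.digits_def' (by norm_num : (1:ℕ) < 2) (by positivity)]
    have h1 : (2*k) % 2 = 0 := by omega
    have h2 : (2*k) / 2 = k := by omega
    rw [h1, h2]
    push_cast [List.sum_cons]
    ring

lemma tm_two_mul_add_one (k : ℕ) : tm (2*k+1) = tm k + 1 := by
  unfold tm
  simp only [Fin.ofNat_eq_cast]
  rw [Nat.digits_def' (by norm_num : (1:ℕ) < 2) (by omega)]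
  have h1 : (2*k+1) % 2 = 1 := by omega
  have h2 : (2*k+1) / 2 = k := by omega
  rw [h1, h2]
  push_cast [List.sum_cons]
  ring

lemma fin2_ne_add_one (x : Fin 2) : x ≠ x + 1 := by revert x; decide

lemma fin2_eq_add_one_of_ne {x y : Fin 2} (h : x ≠ y) : y = x + 1 := by
  revert h; revert x y; decide

lemma tm_ne_of_even (a : ℕ) : tm (2*a) ≠ tm (2*a+1) := by
  rw [tm_two_mul, tm_two_mul_add_one]
  exact fin2_ne_add_one _

lemma no_overlap : ∀ n, 1 ≤ n → ∀ i, ¬ (∀ j ≤ n, tm (i+j) = tm (i+j+n)) := by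
  intro n
  induction n using Nat.strong_induction_on with
  | _ n IH =>
    intro hn i h
    rcases Nat.even_or_odd n with ⟨m, hm⟩ | ⟨q, hq⟩
    · -- n = m + m, even case: halve
      have hm1 : 1 ≤ m := by omega
      rcases Nat.even_or_odd i with ⟨a, ha⟩ | ⟨a, ha⟩
      · apply IH m (by omega) hm1 a
        intro l hl
        have hx := h (2*l) (by omega)
        have e1 : i + 2*l = 2*(a+l) := by omega
        have e2 : i + 2*l + n = 2*(a+l+m) := by omega
        rw [e2, e1, tm_two_mul, tm_two_mul] at hx
        exact hx
      · apply IH m (by omega) hm1 a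
        intro l hl
        have hx := h (2*l) (by omega)
        have e1 : i + 2*l = 2*(a+l) + 1 := by omega
        have e2 : i + 2*l + n = 2*(a+l+m) + 1 := by omega
        rw [e2, e1, tm_two_mul_add_one, tm_two_mul_add_one] at hx
        exact add_right_cancel hx
    · -- n odd
      have key : ∀ k, k < n → tm (i+k) ≠ tm (i+k+1) := by
        intro k hk
        rcases Nat.even_or_odd (i+k) with ⟨a, ha⟩ | ⟨a, ha⟩
        · have e1 : i + k = 2*a := by omega
          rw [e1]; exact tm_ne_of_even a
        · -- i+k odd, so i+k+n even
          obtain ⟨b, hb⟩ : ∃ b, i + k + n = 2*b := by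
            refine ⟨(i+k+n)/2, ?_⟩; omega
          have h1 := h k (by omega)
          have h2 := h (k+1) (by omega)
          rw [h1]
          have e3 : i + (k+1) = i + k + 1 := by omega
          rw [e3] at h2
          have e2 : i + k + 1 + n = 2*b + 1 := by omega
          rw [e2] at h2
          rw [h2, hb]
          exact tm_ne_of_even b
      have alt : ∀ k, k ≤ n → tm (i+k) = tm i + (k : Fin 2) := by
        intro k
        induction k with
        | zero => intro _; simp
        | succ k ih =>
          intro hk
          have hik := ih (by omega)
          have hne := key k (by omega)
          rw [hik] at hne
          have := fin2_eq_add_one_of_ne hne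
          rw [show i + (k+1) = i + k + 1 from by omega, this]
          push_cast
          ring
      have h0 := h 0 (by omega)
      have hend := alt n le_rfl
      have hncast : (n : Fin 2) = 1 := by
        rw [hq]; push_cast
        ring_nf
      rw [hncast] at hend
      simp only [Nat.add_zero] at h0
      rw [h0] at hend
      exact fin2_ne_add_one _ hend


theorem stmt_6 (u : List (Fin 2)) (hu : u ≠ []) :
    ¬ IsFactorOf (u ++ u ++ [u.head hu]) tm := by
  rintro ⟨i, hi⟩
  have hn1 : 1 ≤ u.length := List.length_pos_iff.mpr hu
  have hlen : (u ++ u ++ [u.head hu]).length = 2*u.length + 1 := by simp; omega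
  rw [hlen] at hi
  have hget : ∀ m, m < 2*u.length + 1 →
      (u ++ u ++ [u.head hu])[m]? = some (tm (i + m)) := by
    intro m hm
    rw [hi]
    simp [List.getElem?_map, List.getElem?_range, hm]
  apply no_overlap u.length hn1 i
  intro j hj
  have g1 := hget j (by omega)
  have g2 := hget (j + u.length) (by omega)
  have hper : (u ++ u ++ [u.head hu])[j]? = (u ++ u ++ [u.head hu])[j + u.length]? := by
    rcases Nat.lt_or_ge j u.length with hlt | hge
    · rw [List.getElem?_append_left (by simp; omega), List.getElem?_append_left (by omega)]
      rw [List.getElem?_append_left (by simp; omega), List.getElem?_append_right (by omega)]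
      congr 1
      omega
    · have hj' : j = u.length := by omega
      subst hj'
      rw [List.getElem?_append_left (by simp; omega), List.getElem?_append_right (by omega)]
      rw [List.getElem?_append_right (by simp)]
      simp [List.getElem?_eq_getElem, hn1, List.head_eq_getElem]
  rw [g1, g2] at hper
  have := Option.some.inj hper
  rw [show i + j + u.length = i + (j + u.length) from by omega]
  exact this
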